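/- Let A be a nonempty finite set, α > 0, and let Ω : Δ(A) → ℝ be the scaled negative entropy Ω(π) = α·∑_{a∈A} π(a)·log π(a) (with the convention 0·log 0 = 0). Then Ω is α-strongly convex on Δ(A) with respect to the ℓ¹ norm: for all π, π' ∈ Δ(A) and t ∈ [0,1], Ω(t·π + (1−t)·π') ≤ t·Ω(π) + (1−t)·Ω(π') − (α/2)·t·(1−t)·‖π − π'‖₁². -/

import Mathlib

noncomputable def lhfun (r : ℝ) : ℝ := r * Real.log r - (r-1)*(5*r+1)/(2*(r+2))
noncomputable def lgfun (r : ℝ) : ℝ := Real.log r + 1 - (5*r^2+20*r-7)/(2*(r+2)^2)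

lemma hasDerivAt_lhfun {r : ℝ} (hr : 0 < r) : HasDerivAt lhfun (lgfun r) r := by
  have h2 : r + 2 ≠ 0 := by positivity
  have h1 : HasDerivAt (fun s : ℝ => s * Real.log s) (Real.log r + 1) r := by
    have := (hasDerivAt_id r).mul (Real.hasDerivAt_log hr.ne')
    exact this.congr_deriv (by simp [mul_inv_cancel₀ hr.ne'])
  have h3 : HasDerivAt (fun s : ℝ => (s-1)*(5*s+1)/(2*(s+2)))
      ((5*r^2+20*r-7)/(2*(r+2)^2)) r := by
    have hn : HasDerivAt (fun s : ℝ => (s-1)*(5*s+1)) (10*r - 4) r := by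
      have := ((hasDerivAt_id r).sub_const 1).mul (((hasDerivAt_id r).const_mul 5).add_const 1)
      refine this.congr_deriv ?_
      simp only [id_eq]
      ring
    have hd : HasDerivAt (fun s : ℝ => 2*(s+2)) 2 r := by
      simpa using ((hasDerivAt_id r).add_const 2).const_mul 2
    have := hn.div hd (by positivity)
    refine this.congr_deriv ?_
    rw [div_eq_div_iff (by positivity) (by positivity)]
    ring
  exact h1.sub h3

lemma hasDerivAt_lgfun {r : ℝ} (hr : 0 < r) :
    HasDerivAt lgfun ((r-1)^2*(r+8)/(r*(r+2)^3)) r := by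
  have h2 : r + 2 ≠ 0 := by positivity
  have h1 : HasDerivAt (fun s : ℝ => Real.log s + 1) r⁻¹ r :=
    (Real.hasDerivAt_log hr.ne').add_const 1
  have h3 : HasDerivAt (fun s : ℝ => (5*s^2+20*s-7)/(2*(s+2)^2))
      (27/(r+2)^3) r := by
    have hn : HasDerivAt (fun s : ℝ => 5*s^2+20*s-7) (10*r + 20) r := by
      have := (((hasDerivAt_pow 2 r).const_mul 5).add ((hasDerivAt_id r).const_mul 20)).sub_const 7
      refine this.congr_deriv ?_
      norm_num
      ring
    have hd : HasDerivAt (fun s : ℝ => 2*(s+2)^2) (2*(2*(r+2))) r := by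
      have : HasDerivAt (fun s : ℝ => (s+2)^2) (2*(r+2)) r := by
        have := ((hasDerivAt_id r).add_const 2).pow 2
        exact this.congr_deriv (by simp)
      simpa using this.const_mul 2
    have := hn.div hd (by positivity)
    refine this.congr_deriv ?_
    rw [div_eq_div_iff (by positivity) (by positivity)]
    ring
  have := h1.sub h3
  refine this.congr_deriv ?_
  field_simp
  ring

lemma lhfun_nonneg {r : ℝ} (hr : 0 ≤ r) : 0 ≤ lhfun r := by
  rcases eq_or_lt_of_le hr with h|hr
  · simp [lhfun, ← h]
    norm_num
  have hgmono : MonotoneOn lgfun (Set.Ioi (0:ℝ)) := by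
    apply monotoneOn_of_deriv_nonneg (convex_Ioi 0)
    · exact fun x hx => (hasDerivAt_lgfun hx).continuousAt.continuousWithinAt
    · rw [interior_Ioi]
      exact fun x hx => (hasDerivAt_lgfun hx).differentiableAt.differentiableWithinAt
    · rw [interior_Ioi]
      intro x hx
      rw [(hasDerivAt_lgfun hx).deriv]
      have : (0:ℝ) < x := hx
      positivity
  have hg1 : lgfun 1 = 0 := by norm_num [lgfun]
  have hh1 : lhfun 1 = 0 := by norm_num [lhfun]
  rcases le_total r 1 with hr1 | hr1
  · have hanti : AntitoneOn lhfun (Set.Ioc (0:ℝ) 1) := by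
      apply antitoneOn_of_deriv_nonpos (convex_Ioc 0 1)
      · exact fun x hx => (hasDerivAt_lhfun hx.1).continuousAt.continuousWithinAt
      · rw [interior_Ioc]
        exact fun x hx => (hasDerivAt_lhfun hx.1).differentiableAt.differentiableWithinAt
      · rw [interior_Ioc]
        intro x hx
        rw [(hasDerivAt_lhfun hx.1).deriv]
        have := hgmono (Set.mem_Ioi.2 hx.1) (Set.mem_Ioi.2 one_pos) hx.2.le
        linarith [hg1 ▸ this]
    have := hanti (Set.mem_Ioc.2 ⟨hr, hr1⟩) (Set.mem_Ioc.2 ⟨one_pos, le_refl 1⟩) hr1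
    linarith [hh1 ▸ this]
  · have hmono : MonotoneOn lhfun (Set.Ici (1:ℝ)) := by
      apply monotoneOn_of_deriv_nonneg (convex_Ici 1)
      · exact fun x hx => (hasDerivAt_lhfun (by linarith [Set.mem_Ici.1 hx] : (0:ℝ) < x)).continuousAt.continuousWithinAt
      · rw [interior_Ici]
        exact fun x hx => (hasDerivAt_lhfun (by linarith [Set.mem_Ioi.1 hx] : (0:ℝ) < x)).differentiableAt.differentiableWithinAt
      · rw [interior_Ici]
        intro x hx
        have hx1 : (1:ℝ) < x := hx
        rw [(hasDerivAt_lhfun (by linarith : (0:ℝ) < x)).deriv]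
        have := hgmono (Set.mem_Ioi.2 one_pos) (Set.mem_Ioi.2 (by linarith : (0:ℝ) < x)) hx1.le
        linarith [hg1 ▸ this]
    have := hmono (Set.mem_Ici.2 (le_refl 1)) (Set.mem_Ici.2 hr1) hr1
    linarith [hh1 ▸ this]

/-- Pointwise refined Pinsker bound. -/
lemma pointwise_bound {x y : ℝ} (hx : 0 ≤ x) (hy : 0 ≤ y) (hxy : y = 0 → x = 0) :
    3*(x-y)^2/(2*(x+2*y)) ≤ x * Real.log x - x * Real.log y - x + y := by
  rcases eq_or_lt_of_le hy with h0|hy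
  · have hx0 : x = 0 := hxy h0.symm
    simp [hx0, ← h0]
  rcases eq_or_lt_of_le hx with h0|hx
  · rw [← h0]
    rw [div_le_iff₀ (by positivity)]
    nlinarith
  have hkey : (x-y)*(5*x+y)/(2*(x+2*y)) ≤ x * (Real.log x - Real.log y) := by
    have h0 : 0 ≤ lhfun (x/y) := lhfun_nonneg (by positivity)
    have hlog : Real.log (x/y) = Real.log x - Real.log y := Real.log_div hx.ne' hy.ne'
    unfold lhfun at h0
    rw [hlog] at h0
    have h1 : (x/y - 1)*(5*(x/y)+1)/(2*(x/y+2)) ≤ x/y * (Real.log x - Real.log y) := by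
      linarith
    calc (x-y)*(5*x+y)/(2*(x+2*y)) = y * ((x/y - 1)*(5*(x/y)+1)/(2*(x/y+2))) := by
          field_simp
      _ ≤ y * (x/y * (Real.log x - Real.log y)) :=
          mul_le_mul_of_nonneg_left h1 hy.le
      _ = x * (Real.log x - Real.log y) := by
          field_simp
  have he : 3*(x-y)^2/(2*(x+2*y)) = (x-y)*(5*x+y)/(2*(x+2*y)) - (x - y) := by
    field_simp
    ring
  have hx' : x * (Real.log x - Real.log y) = x * Real.log x - x * Real.log y := by ring
  linarith

/-- Pinsker's inequality for finite probability vectors. -/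
lemma pinsker_fin {A : Type*} [Fintype A] (p q : A → ℝ)
    (hp : ∀ a, 0 ≤ p a) (hq : ∀ a, 0 ≤ q a)
    (hps : ∑ a, p a = 1) (hqs : ∑ a, q a = 1)
    (habs : ∀ a, q a = 0 → p a = 0) :
    (1/2) * (∑ a, |p a - q a|)^2 ≤ ∑ a, (p a * Real.log (p a) - p a * Real.log (q a)) := by
  classical
  set s : Finset A := Finset.univ.filter (fun a => 0 < p a + 2 * q a) with hs
  have hzero : ∀ a ∉ s, p a = 0 ∧ q a = 0 := by
    intro a ha
    simp only [hs, Finset.mem_filter, Finset.mem_univ, true_and, not_lt] at ha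
    constructor <;> nlinarith [hp a, hq a]
  have hw : ∀ a ∈ s, 0 < (p a + 2 * q a) / 3 := by
    intro a ha
    simp only [hs, Finset.mem_filter, Finset.mem_univ, true_and] at ha
    linarith
  -- the KL sum is at least the sum of the pointwise bounds
  have hpq : ∑ a, (p a - q a) = 0 := by
    rw [Finset.sum_sub_distrib, hps, hqs]; ring
  have hRHS : ∑ a, (p a * Real.log (p a) - p a * Real.log (q a))
      = ∑ a, (p a * Real.log (p a) - p a * Real.log (q a) - (p a - q a)) := by
    simp only [Finset.sum_sub_distrib, hps, hqs]
    ring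
  have hterm : ∀ a ∈ Finset.univ (α := A),
      3*(p a - q a)^2/(2*(p a + 2*q a))
        ≤ p a * Real.log (p a) - p a * Real.log (q a) - (p a - q a) := by
    intro a _
    have := pointwise_bound (hp a) (hq a) (habs a)
    linarith
  have h1 : ∑ a, 3*(p a - q a)^2/(2*(p a + 2*q a))
      ≤ ∑ a, (p a * Real.log (p a) - p a * Real.log (q a) - (p a - q a)) :=
    Finset.sum_le_sum hterm
  have hnneg : 0 ≤ ∑ a, 3*(p a - q a)^2/(2*(p a + 2*q a)) := by
    apply Finset.sum_nonneg
    intro a _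
    have := hp a; have := hq a
    positivity
  -- identify the Titu form with the pointwise-bound form
  have hgb : ∀ a : A, |p a - q a|^2 / ((p a + 2*q a)/3)
      = 2 * (3*(p a - q a)^2/(2*(p a + 2*q a))) := by
    intro a
    rw [sq_abs]
    rcases eq_or_lt_of_le (by have := hp a; have := hq a; positivity : (0:ℝ) ≤ p a + 2*q a)
      with h|h
    · rw [← h]; simp
    · field_simp
  have hsplit : ∑ a ∈ s, |p a - q a|^2 / ((p a + 2*q a)/3)
      = ∑ a, |p a - q a|^2 / ((p a + 2*q a)/3) := by
    apply Finset.sum_subset (Finset.subset_univ s)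
    intro a _ ha
    obtain ⟨h1', h2'⟩ := hzero a ha
    simp [h1', h2']
  have htv : ∑ a, |p a - q a| = ∑ a ∈ s, |p a - q a| := by
    symm
    apply Finset.sum_subset (Finset.subset_univ s)
    intro a _ ha
    obtain ⟨h1', h2'⟩ := hzero a ha
    simp [h1', h2']
  have hkl : ∑ a ∈ s, |p a - q a|^2 / ((p a + 2*q a)/3)
      ≤ 2 * ∑ a, (p a * Real.log (p a) - p a * Real.log (q a)) := by
    rw [hsplit]
    calc ∑ a, |p a - q a|^2 / ((p a + 2*q a)/3)
        = ∑ a, 2 * (3*(p a - q a)^2/(2*(p a + 2*q a))) := by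
          exact Finset.sum_congr rfl (fun a _ => hgb a)
      _ = 2 * ∑ a, 3*(p a - q a)^2/(2*(p a + 2*q a)) := by
          rw [Finset.mul_sum]
      _ ≤ 2 * ∑ a, (p a * Real.log (p a) - p a * Real.log (q a) - (p a - q a)) := by
          linarith
      _ = 2 * ∑ a, (p a * Real.log (p a) - p a * Real.log (q a)) := by rw [← hRHS]
  -- Cauchy–Schwarz (Titu) on s
  have hcs := Finset.sq_sum_div_le_sum_sq_div s (fun a => |p a - q a|) hw
  have hRHSnneg : 0 ≤ ∑ a, (p a * Real.log (p a) - p a * Real.log (q a)) := by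
    rw [hRHS]; linarith
  rcases eq_or_lt_of_le (Finset.sum_nonneg (fun a ha => (hw a ha).le)) with hsz|hsz
  · -- s has total weight 0 ⟹ s = ∅ ⟹ total variation is 0
    have hse : ∀ a ∈ s, (p a + 2*q a)/3 = 0 := by
      intro a ha
      have := Finset.sum_eq_zero_iff_of_nonneg (fun a ha => (hw a ha).le) |>.mp hsz.symm
      exact this a ha
    have hsempty : s = ∅ := by
      by_contra h
      obtain ⟨a, ha⟩ := Finset.nonempty_of_ne_empty h
      exact absurd (hse a ha) (hw a ha).ne'
    rw [htv, hsempty]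
    simpa using hRHSnneg
  · have hsum_w : ∑ a ∈ s, (p a + 2 * q a) / 3 ≤ 1 := by
      have hle : ∑ a ∈ s, (p a + 2 * q a) / 3 ≤ ∑ a, (p a + 2 * q a) / 3 := by
        apply Finset.sum_le_sum_of_subset_of_nonneg (Finset.subset_univ s)
        intro a _ _
        have := hp a; have := hq a; positivity
      have heq : ∑ a, (p a + 2 * q a) / 3 = 1 := by
        rw [← Finset.sum_div, Finset.sum_add_distrib, ← Finset.mul_sum, hps, hqs]
        norm_num
      linarith
    have hD : (∑ a, |p a - q a|)^2 / 1 ≤ (∑ a, |p a - q a|)^2 / (∑ a ∈ s, (p a + 2*q a)/3) := by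
      apply div_le_div_of_nonneg_left (sq_nonneg _) hsz hsum_w
    rw [div_one] at hD
    rw [htv] at hD ⊢
    linarith

open scoped BigOperators

/-- The scaled negative entropy `Ω(π) = α ∑_a π(a) log π(a)` (with
`0 log 0 = 0`, which is Lean's convention since `Real.log 0 = 0`) is α-strongly convex
on the probability simplex `Δ(A)` with respect to the ℓ¹ norm. -/
theorem stmt16 {A : Type*} [Fintype A] [Nonempty A]
    (α : ℝ) (hα : 0 < α)
    (Ω : (A → ℝ) → ℝ)
    (hΩ : ∀ π : A → ℝ, Ω π = α * ∑ a, π a * Real.log (π a)) :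
    ∀ π π' : A → ℝ, (∀ a, 0 ≤ π a) → ∑ a, π a = 1 →
      (∀ a, 0 ≤ π' a) → ∑ a, π' a = 1 →
      ∀ t ∈ Set.Icc (0 : ℝ) 1,
        Ω (t • π + (1 - t) • π') ≤
          t * Ω π + (1 - t) * Ω π' -
            (α / 2) * t * (1 - t) * (∑ a, |π a - π' a|) ^ 2 := by
  intro π π' hπ hπs hπ' hπ's t ht
  obtain ⟨ht0, ht1⟩ := ht
  rw [hΩ, hΩ, hΩ]
  have hσa : ∀ a, (t • π + (1 - t) • π') a = t * π a + (1-t) * π' a := by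
    intro a
    simp [Pi.add_apply, Pi.smul_apply, smul_eq_mul]
  rcases eq_or_lt_of_le ht0 with h0|h0
  · -- t = 0
    have hfun : ∀ a, (t • π + (1 - t) • π') a * Real.log ((t • π + (1 - t) • π') a)
        = π' a * Real.log (π' a) := by
      intro a
      rw [hσa a, ← h0]
      norm_num
    rw [Finset.sum_congr rfl (fun a _ => hfun a), ← h0]
    norm_num
  rcases eq_or_lt_of_le ht1 with h1|h1
  · -- t = 1
    have hfun : ∀ a, (t • π + (1 - t) • π') a * Real.log ((t • π + (1 - t) • π') a)
        = π a * Real.log (π a) := by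
      intro a
      rw [hσa a, h1]
      norm_num
    rw [Finset.sum_congr rfl (fun a _ => hfun a), h1]
    norm_num
  -- main case 0 < t < 1
  set σ : A → ℝ := fun a => t * π a + (1-t) * π' a with hσdef
  have hσeq : ∀ a, (t • π + (1 - t) • π') a = σ a := hσa
  have hσn : ∀ a, 0 ≤ σ a := by
    intro a
    have := hπ a; have := hπ' a
    have h1t : 0 ≤ 1 - t := by linarith
    simp only [hσdef]
    positivity
  have hσs : ∑ a, σ a = 1 := by
    simp only [hσdef]
    rw [Finset.sum_add_distrib, ← Finset.mul_sum, ← Finset.mul_sum, hπs, hπ's]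
    ring
  have habs1 : ∀ a, σ a = 0 → π a = 0 := by
    intro a ha
    simp only [hσdef] at ha
    nlinarith [hπ a, hπ' a]
  have habs2 : ∀ a, σ a = 0 → π' a = 0 := by
    intro a ha
    simp only [hσdef] at ha
    nlinarith [hπ a, hπ' a]
  have hK1 := pinsker_fin π σ hπ hσn hπs hσs habs1
  have hK2 := pinsker_fin π' σ hπ' hσn hπ's hσs habs2
  set D := ∑ a, |π a - π' a| with hD
  have htv1 : ∑ a, |π a - σ a| = (1-t) * D := by
    rw [hD, Finset.mul_sum]
    apply Finset.sum_congr rfl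
    intro a _
    simp only [hσdef]
    rw [show π a - (t * π a + (1-t) * π' a) = (1-t)*(π a - π' a) by ring,
      abs_mul, abs_of_nonneg (by linarith : (0:ℝ) ≤ 1 - t)]
  have htv2 : ∑ a, |π' a - σ a| = t * D := by
    rw [hD, Finset.mul_sum]
    apply Finset.sum_congr rfl
    intro a _
    simp only [hσdef]
    rw [show π' a - (t * π a + (1-t) * π' a) = t*(π' a - π a) by ring,
      abs_mul, abs_of_nonneg ht0, abs_sub_comm]
  rw [htv1] at hK1
  rw [htv2] at hK2
  -- split the KL sums
  have hK1' : (1/2) * ((1-t)*D)^2 ≤ ∑ a, π a * Real.log (π a) - ∑ a, π a * Real.log (σ a) := by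
    rw [← Finset.sum_sub_distrib]
    exact hK1
  have hK2' : (1/2) * (t*D)^2 ≤ ∑ a, π' a * Real.log (π' a) - ∑ a, π' a * Real.log (σ a) := by
    rw [← Finset.sum_sub_distrib]
    exact hK2
  have hdecomp : ∑ a, σ a * Real.log (σ a)
      = t * ∑ a, π a * Real.log (σ a) + (1-t) * ∑ a, π' a * Real.log (σ a) := by
    rw [Finset.mul_sum, Finset.mul_sum, ← Finset.sum_add_distrib]
    apply Finset.sum_congr rfl
    intro a _
    simp only [hσdef]
    ring
  rw [Finset.sum_congr rfl (fun a (_ : a ∈ Finset.univ) => by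
    rw [hσeq a] : ∀ a ∈ Finset.univ, (t • π + (1 - t) • π') a * Real.log ((t • π + (1 - t) • π') a) = σ a * Real.log (σ a)), hdecomp]
  have e1 := mul_le_mul_of_nonneg_left hK1' ht0
  have e2 := mul_le_mul_of_nonneg_left hK2' (by linarith : (0:ℝ) ≤ 1 - t)
  set Sπ := ∑ a, π a * Real.log (π a)
  set Sπ' := ∑ a, π' a * Real.log (π' a)
  set L1 := ∑ a, π a * Real.log (σ a)
  set L2 := ∑ a, π' a * Real.log (σ a)
  have hcomb : (1/2)*t*(1-t)*D^2 ≤ t*Sπ + (1-t)*Sπ' - (t*L1 + (1-t)*L2) := by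
    nlinarith [e1, e2]
  nlinarith [mul_le_mul_of_nonneg_left hcomb hα.le]
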